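/- Let V be a real Hilbert space and A : V → V* a bounded linear operator satisfying ⟨Au, u⟩ ≥ C_a‖u‖² for all u, with C_a > 0, and ‖Au‖ ≤ C_b‖u‖. Let Φ : V → V be Lipschitz with constant C_L < C_a/C_b. Then there exist constants C > 0 and c̃ ∈ [0,1) such that for all u, v, φ, ψ ∈ V, ⟨A(u − v), u − Φ(φ) − v + Φ(ψ)⟩ ≥ C(‖u − v‖² − c̃²‖φ − ψ‖²). In fact one may take C = C_a/2 and c̃ = C_b C_L / C_a. -/

import Mathlib

open RealInnerProductSpace

theorem stmt_6 {V : Type*} [NormedAddCommGroup V] [InnerProductSpace ℝ V]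
    (A : V →L[ℝ] V) (Ca Cb CL : ℝ)
    (hCa : 0 < Ca) (hCb : 0 < Cb)
    (hcoer : ∀ u : V, Ca * ‖u‖ ^ 2 ≤ ⟪A u, u⟫)
    (hbdd : ∀ u : V, ‖A u‖ ≤ Cb * ‖u‖)
    (Φ : V → V) (hCL0 : 0 ≤ CL) (hCL : CL < Ca / Cb)
    (hΦ : ∀ x y : V, ‖Φ x - Φ y‖ ≤ CL * ‖x - y‖) :
    ∃ C : ℝ, 0 < C ∧ ∃ c : ℝ, 0 ≤ c ∧ c < 1 ∧ C = Ca / 2 ∧ c = Cb * CL / Ca ∧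
      ∀ u v φ ψ : V,
        C * (‖u - v‖ ^ 2 - c ^ 2 * ‖φ - ψ‖ ^ 2) ≤ ⟪A (u - v), u - Φ φ - v + Φ ψ⟫ := by
  refine ⟨Ca / 2, by positivity, Cb * CL / Ca, by positivity, ?_, rfl, rfl, ?_⟩
  · rw [div_lt_one hCa]
    have := (lt_div_iff₀ hCb).mp hCL
    linarith
  · intro u v φ ψ
    set w := u - v with hw
    set d := Φ φ - Φ ψ with hd
    have heq : u - Φ φ - v + Φ ψ = w - d := by rw [hw, hd]; abel
    rw [heq, inner_sub_right]
    have h1 : Ca * ‖w‖ ^ 2 ≤ ⟪A w, w⟫ := hcoer w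
    have h2 : ⟪A w, d⟫ ≤ (Cb * ‖w‖) * (CL * ‖φ - ψ‖) := by
      calc ⟪A w, d⟫ ≤ ‖A w‖ * ‖d‖ := real_inner_le_norm _ _
        _ ≤ (Cb * ‖w‖) * (CL * ‖φ - ψ‖) := by
            apply mul_le_mul (hbdd w) (hΦ φ ψ) (norm_nonneg _)
            positivity
    have hW : (0:ℝ) ≤ ‖w‖ := norm_nonneg _
    have hT : (0:ℝ) ≤ ‖φ - ψ‖ := norm_nonneg _
    have key : Ca / 2 * (‖w‖ ^ 2 - (Cb * CL / Ca) ^ 2 * ‖φ - ψ‖ ^ 2)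
        ≤ Ca * ‖w‖ ^ 2 - (Cb * ‖w‖) * (CL * ‖φ - ψ‖) := by
      have hCa' : Ca ≠ 0 := ne_of_gt hCa
      rw [div_pow, ← sub_nonneg]
      field_simp
      nlinarith [sq_nonneg (Ca * ‖w‖ - Cb * CL * ‖φ - ψ‖)]
    linarith
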